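/- Let 1/4 < H < 1 and let ρ be a real number satisfying: ρ < 4H-3 if 1/4 < H < 1/2, and ρ < 2(H-1) if 1/2 ≤ H < 1. Then the double series ∑_{k ∈ ℤ²₀} |k|^{2ρ+2} ∑_{h ∈ ℤ²₀, h ≠ k} 1/(|h|^{4H} |k-h|^{4H}) converges (is finite). -/

import Mathlib

/-- Euclidean norm of an element of `ℤ²`. -/
noncomputable def znorm (k : ℤ × ℤ) : ℝ :=
  Real.sqrt ((k.1 : ℝ) ^ 2 + (k.2 : ℝ) ^ 2)

lemma znorm_nonneg (k : ℤ × ℤ) : 0 ≤ znorm k := Real.sqrt_nonneg _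

lemma znorm_zero : znorm 0 = 0 := by simp [znorm]

lemma one_le_znorm {k : ℤ × ℤ} (hk : k ≠ 0) : 1 ≤ znorm k := by
  have h : (1:ℝ) ≤ (k.1 : ℝ) ^ 2 + (k.2 : ℝ) ^ 2 := by
    have h' : k.1 ≠ 0 ∨ k.2 ≠ 0 := by
      by_contra hc
      push_neg at hc
      exact hk (Prod.ext hc.1 hc.2)
    rcases h' with h1 | h1
    · have : (1:ℤ) ≤ |k.1| := Int.one_le_abs h1
      have : (1:ℝ) ≤ |(k.1:ℝ)| := by exact_mod_cast (by push_cast [← Int.cast_abs]; exact_mod_cast this : (1:ℝ) ≤ (|k.1| : ℝ))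
      nlinarith [sq_nonneg ((k.2:ℝ)), sq_abs ((k.1:ℝ))]
    · have : (1:ℤ) ≤ |k.2| := Int.one_le_abs h1
      have : (1:ℝ) ≤ |(k.2:ℝ)| := by exact_mod_cast (by push_cast [← Int.cast_abs]; exact_mod_cast this : (1:ℝ) ≤ (|k.2| : ℝ))
      nlinarith [sq_nonneg ((k.1:ℝ)), sq_abs ((k.2:ℝ))]
  calc (1:ℝ) = Real.sqrt 1 := by simp
  _ ≤ znorm k := Real.sqrt_le_sqrt h

lemma znorm_eq_abs (k : ℤ × ℤ) : znorm k = ‖(⟨(k.1:ℝ), (k.2:ℝ)⟩ : ℂ)‖ := by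
  rw [Complex.norm_def, Complex.normSq_mk, znorm]
  ring_nf

lemma znorm_triangle (k h : ℤ × ℤ) : znorm k ≤ znorm h + znorm (k - h) := by
  rw [znorm_eq_abs, znorm_eq_abs, znorm_eq_abs]
  have : (⟨(k.1:ℝ), (k.2:ℝ)⟩ : ℂ) = ⟨(h.1:ℝ), (h.2:ℝ)⟩ + ⟨((k-h).1:ℝ), ((k-h).2:ℝ)⟩ := by
    apply Complex.ext <;> simp [Prod.fst_sub, Prod.snd_sub] <;> push_cast <;> ring
  rw [this]
  exact norm_add_le _ _



lemma sup_le_znorm (k : ℤ × ℤ) : ‖(![k.1, k.2] : Fin 2 → ℤ)‖ ≤ znorm k := by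
  rw [EisensteinSeries.norm_eq_max_natAbs]
  simp only [Matrix.cons_val_zero, Matrix.cons_val_one, Matrix.head_cons]
  push_cast [Nat.cast_natAbs]
  apply max_le
  · rw [← Real.sqrt_sq_eq_abs]
    exact Real.sqrt_le_sqrt (by nlinarith [sq_nonneg ((k.2:ℝ))])
  · rw [← Real.sqrt_sq_eq_abs]
    exact Real.sqrt_le_sqrt (by nlinarith [sq_nonneg ((k.1:ℝ))])

lemma sum_znorm_rpow_lt_top {s : ℝ} (hs : s < -2) :
    ∑' k : ℤ × ℤ, ENNReal.ofReal (znorm k ^ s) < ⊤ := by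
  have hsum : Summable fun x : Fin 2 → ℤ ↦ ‖x‖ ^ s := by
    have := EisensteinSeries.summable_one_div_norm_rpow (k := -s) (by linarith)
    simpa using this
  have hsum2 : Summable fun k : ℤ × ℤ ↦ ‖(![k.1, k.2] : Fin 2 → ℤ)‖ ^ s := by
    have := ((finTwoArrowEquiv ℤ).symm.summable_iff (f := fun x : Fin 2 → ℤ ↦ ‖x‖ ^ s)).mpr hsum
    simpa [finTwoArrowEquiv, Function.comp_def] using this
  have hle : ∀ k : ℤ × ℤ, ENNReal.ofReal (znorm k ^ s) ≤
      ENNReal.ofReal (‖(![k.1, k.2] : Fin 2 → ℤ)‖ ^ s) := by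
    intro k
    by_cases hk : k = 0
    · subst hk
      simp [znorm, Real.zero_rpow (by linarith : s ≠ 0)]
    · apply ENNReal.ofReal_le_ofReal
      have hpos : 0 < ‖(![k.1, k.2] : Fin 2 → ℤ)‖ := by
        rw [norm_pos_iff]
        intro hc
        apply hk
        have h1 := congrFun hc 0
        have h2 := congrFun hc 1
        simp at h1 h2
        exact Prod.ext h1 h2
      exact Real.rpow_le_rpow_of_nonpos hpos (sup_le_znorm k) (by linarith)
  calc ∑' k : ℤ × ℤ, ENNReal.ofReal (znorm k ^ s)
      ≤ ∑' k : ℤ × ℤ, ENNReal.ofReal (‖(![k.1, k.2] : Fin 2 → ℤ)‖ ^ s) :=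
        ENNReal.tsum_le_tsum hle
    _ = ENNReal.ofReal (∑' k : ℤ × ℤ, ‖(![k.1, k.2] : Fin 2 → ℤ)‖ ^ s) :=
        (ENNReal.ofReal_tsum_of_nonneg (fun k => Real.rpow_nonneg (norm_nonneg _) s) hsum2).symm
    _ < ⊤ := ENNReal.ofReal_lt_top


lemma exists_theta {α β : ℝ} (hα : 1 < α) (h1 : β < α - 2) (h2 : β < 2*α - 4) :
    ∃ θ : ℝ, 0 ≤ θ ∧ θ ≤ 1 ∧ 2 < (1+θ)*α ∧ β + 2 < (1-θ)*α := by
  rcases le_or_gt 0 β with hb | hb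
  · exact ⟨0, le_refl _, zero_le_one, by nlinarith, by nlinarith⟩
  rcases lt_or_ge (-β) (2*α) with hc | hc
  · refine ⟨-β/(2*α), div_nonneg (by linarith) (by linarith), ?_, ?_, ?_⟩
    · rw [div_le_one (by linarith)]; linarith
    · have h : (1 + -β/(2*α)) * α = α - β/2 := by field_simp; ring
      rw [h]; linarith
    · have h : (1 - -β/(2*α)) * α = α + β/2 := by field_simp; ring
      rw [h]; linarith
  · exact ⟨1, zero_le_one, le_refl _, by nlinarith, by nlinarith⟩

lemma real_bound {α β θ A B K : ℝ} (hα : 0 < α) (hθ0 : 0 ≤ θ) (hθ1 : θ ≤ 1)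
    (hA : 1 ≤ A) (hB : 1 ≤ B) (hK : 1 ≤ K) (htri : K ≤ A + B) (hAB : A ≤ B) :
    K ^ β * (1 / (A ^ α * B ^ α)) ≤
      2 ^ ((1-θ)*α) * (K ^ (β - (1-θ)*α) * A ^ (-((1+θ)*α))) := by
  have hA0 : (0:ℝ) < A := by linarith
  have hB0 : (0:ℝ) < B := by linarith
  have hK0 : (0:ℝ) < K := by linarith
  have hK2 : K / 2 ≤ B := by linarith
  have hc0 : 0 ≤ (1-θ)*α := by nlinarith
  have hden : A ^ ((1+θ)*α) * (K/2) ^ ((1-θ)*α) ≤ A ^ α * B ^ α := by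
    have e1 : B ^ α = B ^ (θ*α) * B ^ ((1-θ)*α) := by
      rw [← Real.rpow_add hB0]; ring_nf
    have e2 : A ^ ((1+θ)*α) = A ^ α * A ^ (θ*α) := by
      rw [← Real.rpow_add hA0]; ring_nf
    rw [e1, e2]
    have l1 : A ^ (θ*α) ≤ B ^ (θ*α) := Real.rpow_le_rpow hA0.le hAB (by positivity)
    have l2 : (K/2) ^ ((1-θ)*α) ≤ B ^ ((1-θ)*α) :=
      Real.rpow_le_rpow (by linarith) hK2 hc0
    have p1 : (0:ℝ) ≤ A ^ α := (Real.rpow_pos_of_pos hA0 _).le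
    have p2 : (0:ℝ) ≤ A ^ (θ*α) := (Real.rpow_pos_of_pos hA0 _).le
    have p3 : (0:ℝ) ≤ (K/2) ^ ((1-θ)*α) := Real.rpow_nonneg (by linarith) _
    calc A ^ α * A ^ (θ*α) * (K/2) ^ ((1-θ)*α)
        ≤ A ^ α * B ^ (θ*α) * (K/2) ^ ((1-θ)*α) := by gcongr
      _ ≤ A ^ α * B ^ (θ*α) * B ^ ((1-θ)*α) := by
          have : (0:ℝ) ≤ A ^ α * B ^ (θ*α) := by positivity
          nlinarith [Real.rpow_pos_of_pos hB0 (θ*α)]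
      _ = A ^ α * (B ^ (θ*α) * B ^ ((1-θ)*α)) := by ring
  have hdpos : (0:ℝ) < A ^ ((1+θ)*α) * (K/2) ^ ((1-θ)*α) := by
    have := Real.rpow_pos_of_pos hA0 ((1+θ)*α)
    have := Real.rpow_pos_of_pos (by linarith : (0:ℝ) < K/2) ((1-θ)*α)
    positivity
  have step1 : K ^ β * (1 / (A ^ α * B ^ α)) ≤
      K ^ β * (1 / (A ^ ((1+θ)*α) * (K/2) ^ ((1-θ)*α))) := by
    have hKβ : (0:ℝ) ≤ K ^ β := Real.rpow_nonneg hK0.le _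
    gcongr
  refine step1.trans (le_of_eq ?_)
  rw [Real.div_rpow hK0.le (by norm_num : (0:ℝ) ≤ 2), Real.rpow_neg hA0.le,
    Real.rpow_sub hK0]
  have h2pos : (0:ℝ) < 2 ^ ((1-θ)*α) := Real.rpow_pos_of_pos (by norm_num) _
  have hApos : (0:ℝ) < A ^ ((1+θ)*α) := Real.rpow_pos_of_pos hA0 _
  have hKc : (0:ℝ) < K ^ ((1-θ)*α) := Real.rpow_pos_of_pos hK0 _
  have hKβ : (0:ℝ) < K ^ β := Real.rpow_pos_of_pos hK0 _
  field_simp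

lemma lattice_bound {α β θ : ℝ} (hα : 0 < α) (hθ0 : 0 ≤ θ) (hθ1 : θ ≤ 1)
    {k h : ℤ × ℤ} (hk : k ≠ 0) (hh : h ≠ 0) (hhk : h ≠ k) :
    znorm k ^ β * (1 / (znorm h ^ α * znorm (k - h) ^ α)) ≤
      2 ^ ((1-θ)*α) * (znorm k ^ (β - (1-θ)*α) * znorm h ^ (-((1+θ)*α))
        + znorm k ^ (β - (1-θ)*α) * znorm (k - h) ^ (-((1+θ)*α))) := by
  have hA : 1 ≤ znorm h := one_le_znorm hh
  have hB : 1 ≤ znorm (k - h) := one_le_znorm (sub_ne_zero.mpr (Ne.symm hhk))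
  have hK : 1 ≤ znorm k := one_le_znorm hk
  have htri := znorm_triangle k h
  have h2 : (0:ℝ) < 2 ^ ((1-θ)*α) := Real.rpow_pos_of_pos (by norm_num) _
  have nn1 : (0:ℝ) ≤ znorm k ^ (β - (1-θ)*α) * znorm h ^ (-((1+θ)*α)) := by
    apply mul_nonneg <;> exact Real.rpow_nonneg (by linarith) _
  have nn2 : (0:ℝ) ≤ znorm k ^ (β - (1-θ)*α) * znorm (k - h) ^ (-((1+θ)*α)) := by
    apply mul_nonneg <;> exact Real.rpow_nonneg (by linarith) _
  rcases le_total (znorm h) (znorm (k - h)) with hAB | hAB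
  · calc znorm k ^ β * (1 / (znorm h ^ α * znorm (k - h) ^ α))
        ≤ 2 ^ ((1-θ)*α) * (znorm k ^ (β - (1-θ)*α) * znorm h ^ (-((1+θ)*α))) :=
          real_bound hα hθ0 hθ1 hA hB hK htri hAB
      _ ≤ _ := by nlinarith
  · calc znorm k ^ β * (1 / (znorm h ^ α * znorm (k - h) ^ α))
        = znorm k ^ β * (1 / (znorm (k - h) ^ α * znorm h ^ α)) := by ring_nf
      _ ≤ 2 ^ ((1-θ)*α) * (znorm k ^ (β - (1-θ)*α) * znorm (k - h) ^ (-((1+θ)*α))) :=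
          real_bound hα hθ0 hθ1 hB hA hK (by linarith) hAB
      _ ≤ _ := by nlinarith

theorem statement_7 (H ρ : ℝ) (hH1 : 1 / 4 < H) (hH2 : H < 1)
    (hρ1 : 1 / 4 < H → H < 1 / 2 → ρ < 4 * H - 3)
    (hρ2 : 1 / 2 ≤ H → H < 1 → ρ < 2 * (H - 1)) :
    (∑' k : {k : ℤ × ℤ // k ≠ 0},
      ENNReal.ofReal (znorm k.1 ^ (2 * ρ + 2)) *
        ∑' h : {h : ℤ × ℤ // h ≠ 0 ∧ h ≠ k.1},
          ENNReal.ofReal (1 / (znorm h.1 ^ (4 * H) * znorm (k.1 - h.1) ^ (4 * H)))) < ⊤ := by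
  have hα : (1:ℝ) < 4 * H := by linarith
  have hα0 : (0:ℝ) < 4 * H := by linarith
  have h1 : 2 * ρ + 2 < 4 * H - 2 := by
    rcases lt_or_ge H (1/2) with hc | hc
    · have := hρ1 hH1 hc; linarith
    · have := hρ2 hc hH2; linarith
  have h2 : 2 * ρ + 2 < 2 * (4 * H) - 4 := by
    rcases lt_or_ge H (1/2) with hc | hc
    · have := hρ1 hH1 hc; linarith
    · have := hρ2 hc hH2; linarith
  obtain ⟨θ, hθ0, hθ1, hpθ, hqθ⟩ := exists_theta hα h1 h2
  set c : ℝ := (1-θ) * (4*H) with hc_def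
  set p : ℝ := -((1+θ) * (4*H)) with hp_def
  set q : ℝ := (2*ρ+2) - c with hq_def
  have hp2 : p < -2 := by rw [hp_def]; linarith
  have hq2 : q < -2 := by rw [hq_def, hc_def]; linarith
  set S : ENNReal := ∑' h : ℤ × ℤ, ENNReal.ofReal (znorm h ^ p) with hS_def
  have hS : S < ⊤ := sum_znorm_rpow_lt_top hp2
  set Sq : ENNReal := ∑' k : ℤ × ℤ, ENNReal.ofReal (znorm k ^ q) with hSq_def
  have hSq : Sq < ⊤ := sum_znorm_rpow_lt_top hq2
  set C : ENNReal := ENNReal.ofReal (2 ^ c) * 2 * S with hC_def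
  have key : ∀ k : ℤ × ℤ, k ≠ 0 →
      ENNReal.ofReal (znorm k ^ (2 * ρ + 2)) *
        ∑' h : {h : ℤ × ℤ // h ≠ 0 ∧ h ≠ k},
          ENNReal.ofReal (1 / (znorm h.1 ^ (4 * H) * znorm (k - h.1) ^ (4 * H)))
      ≤ C * ENNReal.ofReal (znorm k ^ q) := by
    intro k hk
    have nn : ∀ (m : ℤ × ℤ) (s : ℝ), 0 ≤ znorm m ^ s := fun m s => Real.rpow_nonneg (znorm_nonneg m) s
    have inner_eq : (∑' h : {h : ℤ × ℤ // h ≠ 0 ∧ h ≠ k},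
        ENNReal.ofReal (1 / (znorm h.1 ^ (4 * H) * znorm (k - h.1) ^ (4 * H))))
        = ∑' h : ℤ × ℤ, ENNReal.ofReal (1 / (znorm h ^ (4 * H) * znorm (k - h) ^ (4 * H))) := by
      have hsupport : Function.support (fun h : ℤ × ℤ =>
          ENNReal.ofReal (1 / (znorm h ^ (4 * H) * znorm (k - h) ^ (4 * H)))) ⊆
          {h : ℤ × ℤ | h ≠ 0 ∧ h ≠ k} := by
        intro h hsupp
        simp only [Function.mem_support] at hsupp
        constructor
        · rintro rfl
          apply hsupp
          simp [znorm_zero, Real.zero_rpow (ne_of_gt hα0)]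
        · rintro rfl
          apply hsupp
          simp [znorm_zero, Real.zero_rpow (ne_of_gt hα0)]
      exact tsum_subtype_eq_of_support_subset hsupport
    rw [inner_eq]
    have nnK : 0 ≤ znorm k ^ (2 * ρ + 2) := Real.rpow_nonneg (znorm_nonneg k) _
    calc ENNReal.ofReal (znorm k ^ (2 * ρ + 2)) *
          ∑' h : ℤ × ℤ, ENNReal.ofReal (1 / (znorm h ^ (4 * H) * znorm (k - h) ^ (4 * H)))
        = ∑' h : ℤ × ℤ, ENNReal.ofReal (znorm k ^ (2 * ρ + 2) *
            (1 / (znorm h ^ (4 * H) * znorm (k - h) ^ (4 * H)))) := by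
          rw [← ENNReal.tsum_mul_left]
          exact tsum_congr fun h => (ENNReal.ofReal_mul nnK).symm
      _ ≤ ∑' h : ℤ × ℤ, ENNReal.ofReal (2 ^ c * (znorm k ^ q * znorm h ^ p
            + znorm k ^ q * znorm (k - h) ^ p)) := by
          apply ENNReal.tsum_le_tsum
          intro h
          apply ENNReal.ofReal_le_ofReal
          by_cases hh : h = 0
          · subst hh
            rw [znorm_zero, Real.zero_rpow (ne_of_gt hα0)]
            simp only [zero_mul, div_zero, mul_zero]
            exact mul_nonneg (by positivity) (add_nonneg
              (mul_nonneg (nn _ _) (Real.rpow_nonneg le_rfl _))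
              (mul_nonneg (nn _ _) (nn _ _)))
          by_cases hhk : h = k
          · subst hhk
            rw [sub_self, znorm_zero, Real.zero_rpow (ne_of_gt hα0)]
            simp only [mul_zero, div_zero]
            exact mul_nonneg (by positivity) (add_nonneg
              (mul_nonneg (nn _ _) (nn _ _))
              (mul_nonneg (nn _ _) (Real.rpow_nonneg le_rfl _)))
          · exact lattice_bound hα0 hθ0 hθ1 hk hh hhk
      _ = ENNReal.ofReal (2 ^ c) * (ENNReal.ofReal (znorm k ^ q) * S
            + ENNReal.ofReal (znorm k ^ q) * S) := by
          have e1 : ∀ h : ℤ × ℤ, ENNReal.ofReal (2 ^ c * (znorm k ^ q * znorm h ^ p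
              + znorm k ^ q * znorm (k - h) ^ p))
              = ENNReal.ofReal (2 ^ c) * (ENNReal.ofReal (znorm k ^ q) * ENNReal.ofReal (znorm h ^ p)
              + ENNReal.ofReal (znorm k ^ q) * ENNReal.ofReal (znorm (k - h) ^ p)) := by
            intro h
            rw [ENNReal.ofReal_mul (by positivity : (0:ℝ) ≤ 2 ^ c),
              ENNReal.ofReal_add (mul_nonneg (nn _ _) (nn _ _)) (mul_nonneg (nn _ _) (nn _ _)),
              ENNReal.ofReal_mul (nn _ _), ENNReal.ofReal_mul (nn _ _)]
          rw [tsum_congr e1, ENNReal.tsum_mul_left]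
          congr 1
          rw [ENNReal.tsum_add, ENNReal.tsum_mul_left, ENNReal.tsum_mul_left]
          congr 1
          congr 1
          exact (Equiv.subLeft k).tsum_eq fun m => ENNReal.ofReal (znorm m ^ p)
      _ = C * ENNReal.ofReal (znorm k ^ q) := by
          rw [hC_def]; ring
  calc (∑' k : {k : ℤ × ℤ // k ≠ 0},
      ENNReal.ofReal (znorm k.1 ^ (2 * ρ + 2)) *
        ∑' h : {h : ℤ × ℤ // h ≠ 0 ∧ h ≠ k.1},
          ENNReal.ofReal (1 / (znorm h.1 ^ (4 * H) * znorm (k.1 - h.1) ^ (4 * H))))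
      ≤ ∑' k : {k : ℤ × ℤ // k ≠ 0}, C * ENNReal.ofReal (znorm k.1 ^ q) :=
        ENNReal.tsum_le_tsum fun k => key k.1 k.2
    _ = C * ∑' k : {k : ℤ × ℤ // k ≠ 0}, ENNReal.ofReal (znorm k.1 ^ q) :=
        ENNReal.tsum_mul_left
    _ ≤ C * Sq := by
        apply mul_le_mul_right
        exact ENNReal.tsum_comp_le_tsum_of_injective Subtype.val_injective _
    _ < ⊤ := by
        apply ENNReal.mul_lt_top _ hSq
        apply ENNReal.mul_lt_top _ hS
        exact ENNReal.mul_lt_top ENNReal.ofReal_lt_top (by norm_num)
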